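/- If a unitary representation U of a finite group G on ℂ^d (d > 2) has a real-valued character, then {U_g : g ∈ G} is not a unitary 2-design. -/

import Mathlib

open MeasureTheory Matrix
open scoped Kronecker ComplexConjugate

noncomputable section

variable {ι : Type} [Fintype ι] [DecidableEq ι]

abbrev UG (ι : Type) [Fintype ι] [DecidableEq ι] := Matrix.unitaryGroup ι ℂ

instance : IsTopologicalGroup (UG ι) where
  continuous_mul := by
    apply Continuous.subtype_mk
    exact (continuous_subtype_val.comp continuous_fst).matrix_mul
      (continuous_subtype_val.comp continuous_snd)
  continuous_inv := by
    apply Continuous.subtype_mk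
    exact continuous_subtype_val.matrix_conjTranspose

theorem isCompact_UG : IsCompact (Matrix.unitaryGroup ι ℂ : Set (Matrix ι ι ℂ)) := by
  have hK : IsCompact (Set.univ.pi fun _ : ι => Set.univ.pi fun _ : ι =>
      Metric.closedBall (0:ℂ) 1) :=
    isCompact_univ_pi fun _ => isCompact_univ_pi fun _ => isCompact_closedBall _ _
  have hof : Continuous (Matrix.of : (ι → ι → ℂ) → Matrix ι ι ℂ) := continuous_id
  have hK' := hK.image hof
  have hcl : IsClosed (Matrix.unitaryGroup ι ℂ : Set (Matrix ι ι ℂ)) := by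
    have he : (Matrix.unitaryGroup ι ℂ : Set (Matrix ι ι ℂ)) =
        (fun A : Matrix ι ι ℂ => A * star A) ⁻¹' {1} := by
      ext A
      simp [Matrix.mem_unitaryGroup_iff]
    rw [he]
    exact IsClosed.preimage (continuous_id.matrix_mul continuous_id.matrix_conjTranspose)
      isClosed_singleton
  apply hK'.of_isClosed_subset hcl
  intro A hA
  have h1 : star A * A = 1 := (Matrix.mem_unitaryGroup_iff').1 hA
  refine ⟨fun i j => A i j, ?_, rfl⟩
  intro i _
  intro j _
  have h2 : ∑ k, Complex.normSq (A k j) = 1 := by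
    have h0 := congrFun (congrFun h1 j) j
    simp only [Matrix.mul_apply, Matrix.one_apply_eq, Matrix.star_apply] at h0
    have h3 : ∀ k : ι, star (A k j) * A k j = (Complex.normSq (A k j) : ℂ) := by
      intro k
      rw [Complex.star_def, Complex.normSq_eq_conj_mul_self]
    simp only [h3] at h0
    exact_mod_cast (by exact_mod_cast h0 : ((∑ k, Complex.normSq (A k j) : ℝ) : ℂ) = 1)
  simp only [Metric.mem_closedBall, dist_zero_right]
  have h4 : Complex.normSq (A i j) ≤ 1 := by
    rw [← h2]
    exact Finset.single_le_sum (f := fun k => Complex.normSq (A k j))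
      (fun k _ => Complex.normSq_nonneg _) (Finset.mem_univ i)
  nlinarith [norm_nonneg (A i j), Complex.normSq_eq_norm_sq (A i j)]

instance : CompactSpace (UG ι) := isCompact_iff_compactSpace.mp isCompact_UG

instance : MeasurableSpace (UG ι) := borel _
instance : BorelSpace (UG ι) := ⟨rfl⟩

/-- The normalized Haar (probability) measure on the unitary group. -/
def haarUG (ι : Type) [Fintype ι] [DecidableEq ι] : Measure (UG ι) :=
  Measure.haarMeasure
    (⟨⟨Set.univ, isCompact_univ⟩, by rw [interior_univ]; exact Set.univ_nonempty⟩ :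
      TopologicalSpace.PositiveCompacts (UG ι))

/-- Haar average of (U⊗U) ρ (U⊗U)†, defined entrywise. -/
def haarTwirl (ι : Type) [Fintype ι] [DecidableEq ι]
    (ρ : Matrix (ι × ι) (ι × ι) ℂ) : Matrix (ι × ι) (ι × ι) ℂ :=
  Matrix.of fun i j =>
    ∫ u : UG ι,
      ((((u : Matrix ι ι ℂ) ⊗ₖ (u : Matrix ι ι ℂ)) * ρ *
        ((u : Matrix ι ι ℂ) ⊗ₖ (u : Matrix ι ι ℂ))ᴴ) i j) ∂(haarUG ι)

/-- A finite family of matrices is a unitary 2-design. -/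
def IsUnitaryTwoDesign {κ : Type} [Fintype κ] (Us : κ → Matrix ι ι ℂ) : Prop :=
  (∀ k, Us k ∈ Matrix.unitaryGroup ι ℂ) ∧
  ∀ ρ : Matrix (ι × ι) (ι × ι) ℂ,
    ((Fintype.card κ : ℂ))⁻¹ • (∑ k, (Us k ⊗ₖ Us k) * ρ * (Us k ⊗ₖ Us k)ᴴ) = haarTwirl ι ρ

/-- The frame potential. -/
def framePotential {κ : Type} [Fintype κ] (Us : κ → Matrix ι ι ℂ) : ℝ :=
  ((Fintype.card κ : ℝ) ^ 2)⁻¹ *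
    ∑ k : κ, ∑ k' : κ, ‖Matrix.trace ((Us k)ᴴ * Us k')‖ ^ 4

namespace RealCharAux

variable {ι : Type} [Fintype ι] [DecidableEq ι]

lemma kron_conjT (A B : Matrix ι ι ℂ) : (A ⊗ₖ B)ᴴ = Aᴴ ⊗ₖ Bᴴ := by
  ext ⟨i, j⟩ ⟨k, l⟩
  simp [Matrix.conjTranspose_apply, Matrix.kroneckerMap_apply, _root_.map_mul]

/-- shorthand for the integrand of the Haar twirl -/
def Ftw (ρ : Matrix (ι × ι) (ι × ι) ℂ) (u : UG ι) : Matrix (ι × ι) (ι × ι) ℂ :=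
  ((u : Matrix ι ι ℂ) ⊗ₖ (u : Matrix ι ι ℂ)) * ρ *
    ((u : Matrix ι ι ℂ) ⊗ₖ (u : Matrix ι ι ℂ))ᴴ

lemma continuous_Ftw (ρ : Matrix (ι × ι) (ι × ι) ℂ) : Continuous (Ftw (ι := ι) ρ) := by
  have hk : Continuous (fun u : UG ι => (u : Matrix ι ι ℂ) ⊗ₖ (u : Matrix ι ι ℂ)) := by
    apply continuous_matrix
    rintro ⟨i, j⟩ ⟨k, l⟩
    exact (continuous_subtype_val.matrix_elem i k).mul
      (continuous_subtype_val.matrix_elem j l)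
  exact (hk.matrix_mul continuous_const).matrix_mul hk.matrix_conjTranspose

instance : (haarUG ι).IsHaarMeasure := Measure.isHaarMeasure_haarMeasure _

lemma integrable_Ftw (ρ : Matrix (ι × ι) (ι × ι) ℂ) (x y : ι × ι) :
    Integrable (fun u : UG ι => Ftw ρ u x y) (haarUG ι) :=
  ((continuous_Ftw ρ).matrix_elem x y).integrable_of_hasCompactSupport
    (HasCompactSupport.of_compactSpace _)

lemma haarTwirl_eq (ρ : Matrix (ι × ι) (ι × ι) ℂ) (i j : ι × ι) :
    haarTwirl ι ρ i j = ∫ u : UG ι, Ftw ρ u i j ∂(haarUG ι) := rfl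

lemma mul_haarTwirl_mul (ρ : Matrix (ι × ι) (ι × ι) ℂ) (A B : Matrix (ι × ι) (ι × ι) ℂ)
    (i j : ι × ι) :
    (A * haarTwirl ι ρ * B) i j = ∫ u : UG ι, (A * Ftw ρ u * B) i j ∂(haarUG ι) := by
  have h1 : ∀ u : UG ι, (A * Ftw ρ u * B) i j
      = ∑ y, (∑ x, A i x * Ftw ρ u x y) * B y j := by
    intro u; simp [Matrix.mul_apply]
  simp_rw [h1]
  rw [integral_finset_sum]
  · have h2 : ∀ y, (∫ u : UG ι, (∑ x, A i x * Ftw ρ u x y) * B y j ∂(haarUG ι))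
        = (∑ x, A i x * (∫ u : UG ι, Ftw ρ u x y ∂(haarUG ι))) * B y j := by
      intro y
      rw [MeasureTheory.integral_mul_const, integral_finset_sum]
      · congr 1
        refine Finset.sum_congr rfl fun x _ => ?_
        rw [MeasureTheory.integral_const_mul]
      · exact fun x _ => (integrable_Ftw ρ x y).const_mul _
    simp_rw [h2]
    simp [Matrix.mul_apply, haarTwirl_eq]
  · intro y _
    exact (integrable_finset_sum _ fun x _ => (integrable_Ftw ρ x y).const_mul _).mul_const _

lemma haarTwirl_conj (ρ : Matrix (ι × ι) (ι × ι) ℂ) (v : UG ι) :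
    ((v : Matrix ι ι ℂ) ⊗ₖ (v : Matrix ι ι ℂ)) * haarTwirl ι ρ *
      ((v : Matrix ι ι ℂ) ⊗ₖ (v : Matrix ι ι ℂ))ᴴ = haarTwirl ι ρ := by
  ext i j
  rw [mul_haarTwirl_mul]
  have key : ∀ u : UG ι,
      (((v : Matrix ι ι ℂ) ⊗ₖ (v : Matrix ι ι ℂ)) * Ftw ρ u *
        ((v : Matrix ι ι ℂ) ⊗ₖ (v : Matrix ι ι ℂ))ᴴ) i j = Ftw ρ (v * u) i j := by
    intro u
    have : ((v : Matrix ι ι ℂ) ⊗ₖ (v : Matrix ι ι ℂ)) * Ftw ρ u *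
        ((v : Matrix ι ι ℂ) ⊗ₖ (v : Matrix ι ι ℂ))ᴴ = Ftw ρ (v * u) := by
      unfold Ftw
      rw [Matrix.UnitaryGroup.mul_val, Matrix.mul_kronecker_mul, Matrix.conjTranspose_mul]
      simp only [Matrix.mul_assoc]
    rw [this]
  simp_rw [key]
  rw [haarTwirl_eq]
  exact MeasureTheory.integral_mul_left_eq_self (fun u : UG ι => Ftw ρ u i j) v

lemma comm_of_conj_fixed {N : Matrix (ι × ι) (ι × ι) ℂ} {v : Matrix ι ι ℂ}
    (hv : v ∈ Matrix.unitaryGroup ι ℂ) (h : (v ⊗ₖ v) * N * (v ⊗ₖ v)ᴴ = N) :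
    (v ⊗ₖ v) * N = N * (v ⊗ₖ v) := by
  have hvv : vᴴ * v = 1 := by
    rw [← Matrix.star_eq_conjTranspose]; exact Matrix.mem_unitaryGroup_iff'.mp hv
  have h1 : (v ⊗ₖ v)ᴴ * (v ⊗ₖ v) = 1 := by
    rw [kron_conjT, ← Matrix.mul_kronecker_mul, hvv, Matrix.one_kronecker_one]
  calc (v ⊗ₖ v) * N = (v ⊗ₖ v) * N * ((v ⊗ₖ v)ᴴ * (v ⊗ₖ v)) := by rw [h1, mul_one]
    _ = ((v ⊗ₖ v) * N * (v ⊗ₖ v)ᴴ) * (v ⊗ₖ v) := by simp only [Matrix.mul_assoc]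
    _ = N * (v ⊗ₖ v) := by rw [h]

lemma sum_eq_single' {α : Type*} [Fintype α] (f : α → ℂ) (p : α)
    (h : ∀ x, x ≠ p → f x = 0) : ∑ x, f x = f p :=
  Finset.sum_eq_single p (fun x _ hx => h x hx) (by simp)

lemma sum_eq_pair {α : Type*} [Fintype α] [DecidableEq α] (f : α → ℂ) {p q : α} (hpq : p ≠ q)
    (h : ∀ x, x ≠ p → x ≠ q → f x = 0) : ∑ x, f x = f p + f q := by
  rw [← Finset.sum_pair hpq]
  exact (Finset.sum_subset (Finset.subset_univ _) (fun x _ hx => by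
    simp only [Finset.mem_insert, Finset.mem_singleton] at hx
    push_neg at hx
    exact h x hx.1 hx.2)).symm

end RealCharAux
namespace RealCharAux

variable {ι : Type} [Fintype ι] [DecidableEq ι]

/-- diagonal unitary with `I` at position `m` -/
def dP (m : ι) : Matrix ι ι ℂ := Matrix.diagonal (fun x => if x = m then Complex.I else 1)

lemma dP_mem (m : ι) : dP m ∈ Matrix.unitaryGroup ι ℂ := by
  rw [Matrix.mem_unitaryGroup_iff, Matrix.star_eq_conjTranspose, dP,
    Matrix.diagonal_conjTranspose, Matrix.diagonal_mul_diagonal]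
  have : ∀ x : ι, (if x = m then Complex.I else 1) *
      (star fun y => if y = m then Complex.I else 1) x = 1 := by
    intro x
    simp only [Pi.star_apply]
    split_ifs <;> simp [Complex.conj_I, Complex.I_mul_I]
  simp only [this]
  exact Matrix.diagonal_one

lemma dP_rel {N : Matrix (ι × ι) (ι × ι) ℂ}
    (hc : ∀ v ∈ Matrix.unitaryGroup ι ℂ, (v ⊗ₖ v) * N = N * (v ⊗ₖ v))
    (m : ι) (p q : ι × ι) :
    ((if p.1 = m then Complex.I else 1) * (if p.2 = m then Complex.I else 1)) * N p q
      = N p q * ((if q.1 = m then Complex.I else 1) * (if q.2 = m then Complex.I else 1)) := by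
  have h := congrFun (congrFun (hc (dP m) (dP_mem m)) p) q
  rw [Matrix.mul_apply, Matrix.mul_apply] at h
  have e1 : ∀ x : ι × ι, x ≠ p → (dP m ⊗ₖ dP m) p x * N x q = 0 := by
    intro x hx
    have hpx : ¬ (p.1 = x.1 ∧ p.2 = x.2) := by
      intro hcon; exact hx (Prod.ext hcon.1.symm hcon.2.symm)
    rcases not_and_or.mp hpx with h' | h' <;>
      simp [dP, Matrix.kroneckerMap_apply, Matrix.diagonal_apply_ne _ h']
  have e2 : ∀ y : ι × ι, y ≠ q → N p y * (dP m ⊗ₖ dP m) y q = 0 := by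
    intro y hy
    have hyq : ¬ (y.1 = q.1 ∧ y.2 = q.2) := by
      intro hcon; exact hy (Prod.ext hcon.1 hcon.2)
    rcases not_and_or.mp hyq with h' | h' <;>
      simp [dP, Matrix.kroneckerMap_apply, Matrix.diagonal_apply_ne _ h']
  rw [sum_eq_single' _ p e1, sum_eq_single' _ q e2] at h
  convert h using 2 <;>
    simp [dP, Matrix.kroneckerMap_apply, Matrix.diagonal_apply_eq]

lemma support_lemma {N : Matrix (ι × ι) (ι × ι) ℂ}
    (hc : ∀ v ∈ Matrix.unitaryGroup ι ℂ, (v ⊗ₖ v) * N = N * (v ⊗ₖ v))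
    {p q : ι × ι} (hN : N p q ≠ 0) : q = p ∨ q = (p.2, p.1) := by
  have key : ∀ m : ι, (if p.1 = m then Complex.I else 1) * (if p.2 = m then Complex.I else 1)
      = (if q.1 = m then Complex.I else 1) * (if q.2 = m then Complex.I else 1) := by
    intro m
    have h := dP_rel hc m p q
    rw [mul_comm (N p q)] at h
    exact mul_right_cancel₀ hN h
  have Ipow_inj : ∀ a b : ℕ, a ≤ 2 → b ≤ 2 → Complex.I ^ a = Complex.I ^ b → a = b := by
    intro a b ha hb h
    interval_cases a <;> interval_cases b <;>
      simp_all [pow_succ, Complex.ext_iff] <;> norm_num at h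
  have hcnt : ∀ m : ι, ((if p.1 = m then 1 else 0) + (if p.2 = m then 1 else 0) : ℕ)
      = (if q.1 = m then 1 else 0) + (if q.2 = m then 1 else 0) := by
    intro m
    have h := key m
    have rw1 : ∀ (c : Prop) [Decidable c],
        (if c then Complex.I else 1) = Complex.I ^ (if c then 1 else 0) := by
      intro c _; split_ifs <;> simp
    rw [rw1, rw1, rw1, rw1, ← pow_add, ← pow_add] at h
    exact Ipow_inj _ _ (by split_ifs <;> norm_num) (by split_ifs <;> norm_num) h
  by_cases a : q.1 = p.1
  · by_cases b : q.2 = p.2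
    · exact Or.inl (Prod.ext a b)
    · exfalso
      have e := hcnt q.2
      have hp2 : ¬ p.2 = q.2 := fun h => b h.symm
      rw [if_pos rfl, if_neg hp2] at e
      by_cases hc1 : p.1 = q.2
      · have hq : q.1 = q.2 := by rw [a, hc1]
        rw [if_pos hc1, if_pos hq] at e; omega
      · have hq : ¬ q.1 = q.2 := by rw [a]; exact hc1
        rw [if_neg hc1, if_neg hq] at e; omega
  · by_cases b : q.1 = p.2
    · by_cases c : q.2 = p.1
      · exact Or.inr (Prod.ext b c)
      · exfalso
        have e := hcnt p.1
        rw [if_pos rfl, if_neg (fun h : q.1 = p.1 => a h),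
          if_neg (fun h : q.2 = p.1 => c h)] at e
        omega
    · exfalso
      have e := hcnt q.1
      rw [if_neg (fun h : p.1 = q.1 => a h.symm), if_neg (fun h : p.2 = q.1 => b h.symm),
        if_pos rfl] at e
      omega

end RealCharAux
namespace RealCharAux

variable {ι : Type} [Fintype ι] [DecidableEq ι]

/-- permutation matrix -/
def pM (σ : Equiv.Perm ι) : Matrix ι ι ℂ := Matrix.of fun i j => if i = σ j then 1 else 0

lemma pM_mem (σ : Equiv.Perm ι) : pM σ ∈ Matrix.unitaryGroup ι ℂ := by
  rw [Matrix.mem_unitaryGroup_iff]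
  ext i k
  rw [Matrix.mul_apply]
  rw [sum_eq_single' _ (σ⁻¹ i) (fun j hj => ?_)]
  · have : i = σ (σ⁻¹ i) := (Equiv.apply_symm_apply σ i).symm
    simp only [pM, Matrix.star_apply, Matrix.of_apply, if_pos this, one_mul]
    by_cases hik : k = σ (σ⁻¹ i)
    · have : i = k := by rw [hik, ← this]
      simp [hik, ← this, Matrix.one_apply, this ▸ hik]
    · have h2 : ¬ i = k := fun h => hik (h ▸ this)
      simp [hik, Matrix.one_apply, h2, show ¬ k = i from fun h => h2 h.symm]
  · have : ¬ i = σ j := fun h => hj (by rw [h]; simp)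
    simp [pM, this]

lemma perm_rel {N : Matrix (ι × ι) (ι × ι) ℂ}
    (hc : ∀ v ∈ Matrix.unitaryGroup ι ℂ, (v ⊗ₖ v) * N = N * (v ⊗ₖ v))
    (σ : Equiv.Perm ι) (a b k l : ι) :
    N (a, b) (k, l) = N (σ a, σ b) (σ k, σ l) := by
  have h := congrFun (congrFun (hc (pM σ) (pM_mem σ)) (σ a, σ b)) (k, l)
  rw [Matrix.mul_apply, Matrix.mul_apply] at h
  have e1 : ∀ x : ι × ι, x ≠ (a, b) → (pM σ ⊗ₖ pM σ) (σ a, σ b) x * N x (k, l) = 0 := by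
    intro x hx
    have : ¬ (σ a = σ x.1 ∧ σ b = σ x.2) := by
      intro hcon
      exact hx (Prod.ext (σ.injective hcon.1).symm (σ.injective hcon.2).symm)
    rcases not_and_or.mp this with h' | h' <;>
      simp [pM, Matrix.kroneckerMap_apply, h']
  have e2 : ∀ y : ι × ι, y ≠ (σ k, σ l) → N (σ a, σ b) y * (pM σ ⊗ₖ pM σ) y (k, l) = 0 := by
    intro y hy
    have : ¬ (y.1 = σ k ∧ y.2 = σ l) := by
      intro hcon; exact hy (Prod.ext hcon.1 hcon.2)
    rcases not_and_or.mp this with h' | h' <;>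
      simp [pM, Matrix.kroneckerMap_apply, h']
  rw [sum_eq_single' _ (a, b) e1, sum_eq_single' _ (σ k, σ l) e2] at h
  simpa [pM, Matrix.kroneckerMap_apply] using h

lemma exists_swap_pair {i j k l : ι} (hij : i ≠ j) (hkl : k ≠ l) :
    ∃ σ : Equiv.Perm ι, σ i = k ∧ σ j = l := by
  classical
  set σ₁ := Equiv.swap i k with hσ₁
  have h1 : σ₁ i = k := Equiv.swap_apply_left i k
  set j' := σ₁ j with hj'
  have hj'k : j' ≠ k := by
    intro h
    exact hij (σ₁.injective (by rw [h1, ← h]))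
  refine ⟨σ₁.trans (Equiv.swap j' l), ?_, ?_⟩
  · have : (σ₁.trans (Equiv.swap j' l)) i = Equiv.swap j' l k := by
      simp [Equiv.trans_apply, h1]
    rw [this, Equiv.swap_apply_of_ne_of_ne (Ne.symm hj'k) hkl]
  · have : (σ₁.trans (Equiv.swap j' l)) j = Equiv.swap j' l j' := by
      simp [Equiv.trans_apply, hj']
    rw [this, Equiv.swap_apply_left]

end RealCharAux
namespace RealCharAux

variable {ι : Type} [Fintype ι] [DecidableEq ι]

/-- a real rotation by the (3,4,5) angle in the plane spanned by coordinates `i0, i1` -/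
def rot (i0 i1 : ι) : Matrix ι ι ℂ := Matrix.of fun i j =>
  if i = i0 ∧ j = i0 then ((3/5 : ℝ) : ℂ) else if i = i0 ∧ j = i1 then ((4/5 : ℝ) : ℂ)
  else if i = i1 ∧ j = i0 then ((-(4/5) : ℝ) : ℂ) else if i = i1 ∧ j = i1 then ((3/5 : ℝ) : ℂ)
  else if i = j then 1 else 0

lemma rot_real (i0 i1 i j : ι) :
    (starRingEnd ℂ) (rot i0 i1 i j) = rot i0 i1 i j := by
  unfold rot
  simp only [Matrix.of_apply]
  split_ifs <;> simp [Complex.conj_ofReal, map_ofNat]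

lemma rot_row_other {i0 i1 i : ι} (hi0 : i ≠ i0) (hi1 : i ≠ i1) (j : ι) :
    rot i0 i1 i j = if i = j then 1 else 0 := by
  simp [rot, hi0, hi1]

lemma rot_col_other {i0 i1 j : ι} (hj0 : j ≠ i0) (hj1 : j ≠ i1) (i : ι) :
    rot i0 i1 i j = if i = j then 1 else 0 := by
  unfold rot
  simp only [Matrix.of_apply, hj0, hj1, and_false, if_false]

lemma rot_mem {i0 i1 : ι} (h01 : i0 ≠ i1) : rot i0 i1 ∈ Matrix.unitaryGroup ι ℂ := by
  have h10 : i1 ≠ i0 := Ne.symm h01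
  have hv00 : rot i0 i1 i0 i0 = ((3/5 : ℝ) : ℂ) := by simp [rot]
  have hv01 : rot i0 i1 i0 i1 = ((4/5 : ℝ) : ℂ) := by simp [rot, h01, h10]
  have hv10 : rot i0 i1 i1 i0 = ((-(4/5) : ℝ) : ℂ) := by simp [rot, h01, h10]
  have hv11 : rot i0 i1 i1 i1 = ((3/5 : ℝ) : ℂ) := by simp [rot, h01, h10]
  rw [Matrix.mem_unitaryGroup_iff]
  ext i k
  rw [Matrix.mul_apply]
  have hstar : ∀ j, (star (rot i0 i1)) j k = rot i0 i1 k j := by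
    intro j
    rw [Matrix.star_apply, RCLike.star_def, rot_real]
  simp only [hstar]
  by_cases hi0 : i = i0
  · subst hi0
    rw [sum_eq_pair (f := fun j => rot i i1 i j * rot i i1 k j) h01
      (fun j hj0 hj1 => by
        show rot i i1 i j * rot i i1 k j = 0
        rw [rot_col_other hj0 hj1, if_neg (fun h : i = j => hj0 h.symm), zero_mul]),
      hv00, hv01]
    by_cases hk0 : k = i
    · rw [hk0, hv00, hv01, Matrix.one_apply_eq]
      push_cast; norm_num
    · by_cases hk1 : k = i1
      · rw [hk1, hv10, hv11, Matrix.one_apply_ne h01]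
        push_cast; ring
      · rw [rot_row_other hk0 hk1, rot_row_other hk0 hk1,
          if_neg (fun h : k = i => hk0 h), if_neg (fun h : k = i1 => hk1 h),
          Matrix.one_apply_ne (fun h : i = k => hk0 h.symm)]
        ring
  · by_cases hi1 : i = i1
    · subst hi1
      rw [sum_eq_pair (f := fun j => rot i0 i i j * rot i0 i k j) h01
        (fun j hj0 hj1 => by
          show rot i0 i i j * rot i0 i k j = 0
          rw [rot_col_other hj0 hj1, if_neg (fun h : i = j => hj1 h.symm), zero_mul]),
        hv10, hv11]
      by_cases hk0 : k = i0
      · rw [hk0, hv00, hv01, Matrix.one_apply_ne h10]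
        push_cast; ring
      · by_cases hk1 : k = i
        · rw [hk1, hv10, hv11, Matrix.one_apply_eq]
          push_cast; norm_num
        · rw [rot_row_other hk0 hk1, rot_row_other hk0 hk1,
            if_neg (fun h : k = i0 => hk0 h), if_neg (fun h : k = i => hk1 h),
            Matrix.one_apply_ne (fun h : i = k => hk1 h.symm)]
          ring
    · rw [sum_eq_single' _ i (fun j hj => by
        rw [rot_row_other hi0 hi1, if_neg (fun h : i = j => hj h.symm), zero_mul])]
      rw [rot_row_other hi0 hi1, if_pos rfl, one_mul, rot_col_other hi0 hi1,
        Matrix.one_apply]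
      by_cases hik : i = k
      · simp [hik]
      · simp [hik, show ¬ k = i from fun h => hik h.symm]

end RealCharAux
namespace RealCharAux

variable {ι : Type} [Fintype ι] [DecidableEq ι]

lemma rot_rel {N : Matrix (ι × ι) (ι × ι) ℂ}
    (hc : ∀ v ∈ Matrix.unitaryGroup ι ℂ, (v ⊗ₖ v) * N = N * (v ⊗ₖ v))
    {i0 i1 : ι} (h01 : i0 ≠ i1) :
    N (i0, i0) (i0, i0) = N (i0, i1) (i0, i1) + N (i1, i0) (i0, i1) := by
  have h10 : i1 ≠ i0 := Ne.symm h01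
  have hv00 : rot i0 i1 i0 i0 = ((3/5 : ℝ) : ℂ) := by simp [rot]
  have hv01 : rot i0 i1 i0 i1 = ((4/5 : ℝ) : ℂ) := by simp [rot, h01, h10]
  have h := congrFun (congrFun (hc (rot i0 i1) (rot_mem h01)) (i0, i0)) (i0, i1)
  rw [Matrix.mul_apply, Matrix.mul_apply] at h
  have hne : ((i0, i1) : ι × ι) ≠ (i1, i0) := fun hcon => h01 (congrArg Prod.fst hcon)
  have e1 : ∀ x : ι × ι, x ≠ (i0, i1) → x ≠ (i1, i0) →
      (rot i0 i1 ⊗ₖ rot i0 i1) (i0, i0) x * N x (i0, i1) = 0 := by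
    intro x h1 h2
    have hzero : N x (i0, i1) = 0 := by
      by_contra hne'
      rcases support_lemma hc hne' with h' | h'
      · exact h1 h'.symm
      · exact h2 (Prod.ext (congrArg Prod.snd h').symm (congrArg Prod.fst h').symm)
    rw [hzero, mul_zero]
  have e2 : ∀ y : ι × ι, y ≠ (i0, i0) →
      N (i0, i0) y * (rot i0 i1 ⊗ₖ rot i0 i1) y (i0, i1) = 0 := by
    intro y hy
    have hzero : N (i0, i0) y = 0 := by
      by_contra hne'
      rcases support_lemma hc hne' with h' | h'
      · exact hy h'
      · exact hy h'
    rw [hzero, zero_mul]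
  rw [sum_eq_pair _ hne e1, sum_eq_single' _ (i0, i0) e2] at h
  simp only [Matrix.kroneckerMap_apply, hv00, hv01] at h
  -- h : r * N (i0,i1) (i0,i1) + r * N (i1,i0) (i0,i1) = N (i0,i0) (i0,i0) * r
  have hr : ((3/5 : ℝ) : ℂ) * ((4/5 : ℝ) : ℂ) ≠ 0 := by push_cast; norm_num
  have h' : (((3/5 : ℝ) : ℂ) * ((4/5 : ℝ) : ℂ)) *
      (N (i0, i1) (i0, i1) + N (i1, i0) (i0, i1))
      = (((3/5 : ℝ) : ℂ) * ((4/5 : ℝ) : ℂ)) * N (i0, i0) (i0, i0) := by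
    rw [mul_add]
    rw [mul_comm (N (i0, i0) (i0, i0))] at h
    convert h using 2 <;> ring
  exact (mul_left_cancel₀ hr h').symm

/-- from the two-sided diagonal/row relations plus unitarity, conclude `u ⊗ₖ u = 1` -/
lemma case_pm {d : ℕ} (hd : 2 < d) {u : Matrix (Fin d) (Fin d) ℂ}
    (hortho : ∀ i j : Fin d, (∑ l, u i l * (starRingEnd ℂ) (u j l))
      = if i = j then 1 else 0)
    (s : ℂ)
    (hrow : ∀ i j k l : Fin d, i ≠ j → u i k * u j l + s * (u j k * u i l)
      = (if k = i ∧ l = j then 1 else 0) + s * (if k = j ∧ l = i then 1 else 0)) :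
    u ⊗ₖ u = 1 := by
  have exists_third : ∀ i k : Fin d, ∃ j : Fin d, j ≠ i ∧ j ≠ k := by
    intro i k
    by_contra hcon
    push_neg at hcon
    have hsub : (Finset.univ : Finset (Fin d)) ⊆ {i, k} := by
      intro j _
      rcases eq_or_ne j i with h | h
      · simp [h]
      · simp [hcon j h]
    have hcard := Finset.card_le_card hsub
    rw [Finset.card_univ, Fintype.card_fin] at hcard
    have : ({i, k} : Finset (Fin d)).card ≤ 2 :=
      le_trans (Finset.card_insert_le _ _) (by simp)
    omega
  have key : ∀ i j k : Fin d, i ≠ j → u i k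
      = (if k = i then (starRingEnd ℂ) (u j j) else 0)
        + s * (if k = j then (starRingEnd ℂ) (u j i) else 0) := by
    intro i j k hij
    have hsum : ∑ l, (u i k * u j l + s * (u j k * u i l)) * (starRingEnd ℂ) (u j l)
        = ∑ l, ((if k = i ∧ l = j then (1:ℂ) else 0)
            + s * (if k = j ∧ l = i then 1 else 0)) * (starRingEnd ℂ) (u j l) :=
      Finset.sum_congr rfl fun l _ => by rw [hrow i j k l hij]
    have hLHS : ∑ l, (u i k * u j l + s * (u j k * u i l)) * (starRingEnd ℂ) (u j l)
        = u i k * (∑ l, u j l * (starRingEnd ℂ) (u j l))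
          + s * (u j k * (∑ l, u i l * (starRingEnd ℂ) (u j l))) := by
      rw [Finset.mul_sum, Finset.mul_sum, Finset.mul_sum, ← Finset.sum_add_distrib]
      exact Finset.sum_congr rfl fun l _ => by ring
    have hRHS : ∑ l, ((if k = i ∧ l = j then (1:ℂ) else 0)
          + s * (if k = j ∧ l = i then 1 else 0)) * (starRingEnd ℂ) (u j l)
        = (if k = i then (starRingEnd ℂ) (u j j) else 0)
          + s * (if k = j then (starRingEnd ℂ) (u j i) else 0) := by
      have hsplit : ∀ l : Fin d, ((if k = i ∧ l = j then (1:ℂ) else 0)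
            + s * (if k = j ∧ l = i then 1 else 0)) * (starRingEnd ℂ) (u j l)
          = (if k = i ∧ l = j then (1:ℂ) else 0) * (starRingEnd ℂ) (u j l)
            + s * ((if k = j ∧ l = i then (1:ℂ) else 0) * (starRingEnd ℂ) (u j l)) :=
        fun l => by ring
      rw [Finset.sum_congr rfl (fun l _ => hsplit l), Finset.sum_add_distrib,
        ← Finset.mul_sum]
      rw [sum_eq_single' _ j (fun l hl => by simp [hl]),
        sum_eq_single' _ i (fun l hl => by simp [hl])]
      by_cases hki : k = i <;> by_cases hkj : k = j <;> simp [hki, hkj]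
    rw [hLHS, hRHS] at hsum
    rw [hortho j j, hortho i j, if_pos rfl, if_neg hij] at hsum
    simpa using hsum
  have hoff : ∀ i k : Fin d, i ≠ k → u i k = 0 := by
    intro i k hik
    obtain ⟨j, hji, hjk⟩ := exists_third i k
    have hk := key i j k (Ne.symm hji)
    rw [if_neg (fun h : k = i => hik h.symm), if_neg (fun h : k = j => hjk h.symm)] at hk
    simpa using hk
  have hdiagconj : ∀ i j : Fin d, i ≠ j → u i i = (starRingEnd ℂ) (u j j) := by
    intro i j hij
    have hk := key i j i hij
    rw [if_pos rfl, if_neg (fun h : i = j => hij h)] at hk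
    simpa using hk
  have hdiageq : ∀ i j : Fin d, u i i = u j j := by
    intro i j
    rcases eq_or_ne i j with rfl | hij
    · rfl
    · obtain ⟨m, hmi, hmj⟩ := exists_third i j
      rw [hdiagconj i m (Ne.symm hmi), hdiagconj j m (Ne.symm hmj)]
  have h01 : (⟨0, by omega⟩ : Fin d) ≠ (⟨1, by omega⟩ : Fin d) := by
    intro h
    have := congrArg Fin.val h
    simp at this
  have hone : ∀ i j : Fin d, u i i * u j j = 1 := by
    intro i j
    have hz := hrow ⟨0, by omega⟩ ⟨1, by omega⟩ ⟨0, by omega⟩ ⟨1, by omega⟩ h01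
    rw [hoff _ _ (Ne.symm h01), hoff _ _ h01] at hz
    simp only [mul_zero, zero_mul, add_zero, if_pos (And.intro rfl rfl)] at hz
    rw [if_neg (fun hcon : (⟨0, by omega⟩ : Fin d) = ⟨1, by omega⟩ ∧ _ => h01 hcon.1)] at hz
    rw [hdiageq i ⟨0, by omega⟩, hdiageq j ⟨1, by omega⟩]
    simpa using hz
  ext ⟨i, j⟩ ⟨k, l⟩
  rw [Matrix.kroneckerMap_apply, Matrix.one_apply]
  by_cases hik : i = k
  · by_cases hjl : j = l
    · rw [← hik, ← hjl, if_pos rfl]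
      exact hone i j
    · rw [hoff j l hjl, mul_zero,
        if_neg (fun h : (i, j) = (k, l) => hjl (congrArg Prod.snd h))]
  · rw [hoff i k hik, zero_mul,
      if_neg (fun h : (i, j) = (k, l) => hik (congrArg Prod.fst h))]

end RealCharAux
namespace RealCharAux

lemma main_aux {d : ℕ} (hd : 2 < d) {G : Type} [Group G] [Fintype G]
    (π : G →* Matrix.unitaryGroup (Fin d) ℂ)
    (hreal : ∀ g : G, (starRingEnd ℂ) (Matrix.trace (π g : Matrix (Fin d) (Fin d) ℂ))
      = Matrix.trace (π g : Matrix (Fin d) (Fin d) ℂ))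
    (hdes : ∀ ρ : Matrix (Fin d × Fin d) (Fin d × Fin d) ℂ,
      ((Fintype.card G : ℂ))⁻¹ • (∑ g : G,
        ((π g : Matrix (Fin d) (Fin d) ℂ) ⊗ₖ (π g : Matrix (Fin d) (Fin d) ℂ)) * ρ *
        ((π g : Matrix (Fin d) (Fin d) ℂ) ⊗ₖ (π g : Matrix (Fin d) (Fin d) ℂ))ᴴ)
      = haarTwirl (Fin d) ρ) :
    False := by
  classical
  set i0 : Fin d := ⟨0, by omega⟩ with hi0def
  set i1 : Fin d := ⟨1, by omega⟩ with hi1def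
  have h01 : i0 ≠ i1 := by
    intro h
    have := congrArg Fin.val h
    simp [hi0def, hi1def] at this
  have h10 : i1 ≠ i0 := Ne.symm h01
  have hne01 : ((i0, i1) : Fin d × Fin d) ≠ (i1, i0) :=
    fun hcon => h01 (congrArg Prod.fst hcon)
  set U : G → Matrix (Fin d) (Fin d) ℂ := fun g => (π g : Matrix (Fin d) (Fin d) ℂ)
    with hUdef
  set M : G → Matrix (Fin d × Fin d) (Fin d × Fin d) ℂ := fun g => U g ⊗ₖ U g with hMdef
  have hUmul : ∀ g h : G, U g * U h = U (g * h) := by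
    intro g h
    rw [hUdef]
    simp only
    rw [_root_.map_mul]
    rfl
  have hMmul : ∀ g h : G, M g * M h = M (g * h) := by
    intro g h
    rw [hMdef]
    simp only
    rw [← Matrix.mul_kronecker_mul, hUmul]
  have hUstar : ∀ g : G, (U g)ᴴ = U g⁻¹ := by
    intro g
    rw [hUdef]
    simp only
    rw [← Matrix.star_eq_conjTranspose, ← Matrix.UnitaryGroup.inv_val, ← map_inv]
  have hMH : ∀ g : G, (M g)ᴴ = M g⁻¹ := by
    intro g
    rw [hMdef]
    simp only
    rw [kron_conjT, hUstar]
  have cardG : (Fintype.card G : ℂ) ≠ 0 := Nat.cast_ne_zero.mpr Fintype.card_ne_zero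
  have hsumconst : ∀ X : Matrix (Fin d × Fin d) (Fin d × Fin d) ℂ,
      (Fintype.card G : ℂ)⁻¹ • ∑ _g : G, X = X := by
    intro X
    rw [Finset.sum_const, Finset.card_univ, ← Nat.cast_smul_eq_nsmul ℂ, smul_smul,
      inv_mul_cancel₀ cardG, one_smul]
  set P : Matrix (Fin d × Fin d) (Fin d × Fin d) ℂ :=
    (Fintype.card G : ℂ)⁻¹ • ∑ g : G, M g with hPdef
  have habsL : ∀ h : G, M h * P = P := by
    intro h
    rw [hPdef, Matrix.mul_smul, Finset.mul_sum]
    congr 1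
    exact Fintype.sum_bijective (fun g => h * g) (Group.mulLeft_bijective h) _ _
      (fun g => hMmul h g)
  have habsR : ∀ h : G, P * M h = P := by
    intro h
    rw [hPdef, Matrix.smul_mul, Finset.sum_mul]
    congr 1
    exact Fintype.sum_bijective (fun g => g * h) (Group.mulRight_bijective h) _ _
      (fun g => hMmul g h)
  have hPP : P * P = P := by
    conv_lhs => rw [hPdef]
    rw [Matrix.smul_mul, Finset.sum_mul,
      Finset.sum_congr rfl (fun g (_ : g ∈ Finset.univ) => habsL g)]
    exact hsumconst P
  have hHP : haarTwirl (Fin d) P = P := by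
    rw [← hdes P]
    have he : ∀ g : G, (U g ⊗ₖ U g) * P * (U g ⊗ₖ U g)ᴴ = P := by
      intro g
      have h1 : (U g ⊗ₖ U g) = M g := rfl
      rw [h1, habsL g, hMH g, habsR g⁻¹]
    rw [Finset.sum_congr rfl (fun g (_ : g ∈ Finset.univ) => he g)]
    exact hsumconst P
  have hcomm : ∀ v ∈ Matrix.unitaryGroup (Fin d) ℂ, (v ⊗ₖ v) * P = P * (v ⊗ₖ v) := by
    intro v hv
    refine comm_of_conj_fixed hv ?_
    have h := haarTwirl_conj P (⟨v, hv⟩ : UG (Fin d))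
    rw [hHP] at h
    exact h
  set a : ℂ := P (i0, i1) (i0, i1) with hadef
  set b : ℂ := P (i0, i1) (i1, i0) with hbdef
  set c : ℂ := P (i0, i0) (i0, i0) with hcdef
  have hua : ∀ i j : Fin d, i ≠ j → P (i, j) (i, j) = a := by
    intro i j hij
    obtain ⟨σ, hσ1, hσ2⟩ := exists_swap_pair hij h01
    have h := perm_rel hcomm σ i j i j
    rw [hσ1, hσ2] at h
    exact h
  have hub : ∀ i j : Fin d, i ≠ j → P (i, j) (j, i) = b := by
    intro i j hij
    obtain ⟨σ, hσ1, hσ2⟩ := exists_swap_pair hij h01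
    have h := perm_rel hcomm σ i j j i
    rw [hσ1, hσ2] at h
    exact h
  have huc : ∀ i : Fin d, P (i, i) (i, i) = c := by
    intro i
    have h := perm_rel hcomm (Equiv.swap i i0) i i i i
    rw [Equiv.swap_apply_left] at h
    exact h
  have hsupp : ∀ p q : Fin d × Fin d, q ≠ p → q ≠ (p.2, p.1) → P p q = 0 := by
    intro p q h1 h2
    by_contra h
    rcases support_lemma hcomm h with h' | h'
    · exact h1 h'
    · exact h2 h'
  have hcab : c = a + b := by
    have h := rot_rel hcomm h01
    rw [hub i1 i0 h10] at h
    exact h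
  -- the trace of P is nonzero
  have htr : Matrix.trace P ≠ 0 := by
    rw [hPdef, Matrix.trace_smul, Matrix.trace_sum]
    have hterm : ∀ g : G, Matrix.trace (M g)
        = ((Complex.normSq (Matrix.trace (U g)) : ℝ) : ℂ) := by
      intro g
      have h1 : Matrix.trace (M g) = Matrix.trace (U g) * Matrix.trace (U g) :=
        Matrix.trace_kronecker (U g) (U g)
      rw [h1]
      nth_rewrite 2 [← hreal g]
      rw [Complex.mul_conj]
    rw [Finset.sum_congr rfl (fun g (_ : g ∈ Finset.univ) => hterm g), ← Complex.ofReal_sum,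
      smul_eq_mul]
    intro hcon
    rcases mul_eq_zero.mp hcon with h | h
    · exact (inv_ne_zero cardG) h
    · rw [Complex.ofReal_eq_zero] at h
      have htr1 : Matrix.trace (U 1) = (d : ℂ) := by
        rw [hUdef]
        simp only
        rw [_root_.map_one]
        have : ((1 : Matrix.unitaryGroup (Fin d) ℂ) : Matrix (Fin d) (Fin d) ℂ) = 1 := rfl
        rw [this, Matrix.trace_one]
        simp
      have hpos : 0 < Complex.normSq (Matrix.trace (U 1)) := by
        rw [htr1]
        apply Complex.normSq_pos.mpr
        exact_mod_cast Nat.cast_ne_zero.mpr (by omega : d ≠ 0)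
      have hle : Complex.normSq (Matrix.trace (U 1))
          ≤ ∑ g : G, Complex.normSq (Matrix.trace (U g)) :=
        Finset.single_le_sum (f := fun g : G => Complex.normSq (Matrix.trace (U g)))
          (fun g _ => Complex.normSq_nonneg _) (Finset.mem_univ (1 : G))
      rw [h] at hle
      linarith
  have hab : ¬ (a = 0 ∧ b = 0) := by
    rintro ⟨ha, hb⟩
    apply htr
    have hdiag : ∀ p : Fin d × Fin d, P p p = 0 := by
      rintro ⟨i, j⟩
      rcases eq_or_ne i j with rfl | hij
      · rw [huc i, hcab, ha, hb, add_zero]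
      · rw [hua i j hij, ha]
    rw [Matrix.trace]
    exact Finset.sum_eq_zero fun p _ => hdiag p
  -- row relations from absorption
  have hoffrow : ∀ (g : G) (i j : Fin d) (q : Fin d × Fin d), i ≠ j →
      a * M g (i, j) q + b * M g (j, i) q = P (i, j) q := by
    intro g i j q hij
    have h := congrFun (congrFun (habsR g) (i, j)) q
    rw [Matrix.mul_apply] at h
    have hne : ((i, j) : Fin d × Fin d) ≠ (j, i) := fun hcon => hij (congrArg Prod.fst hcon)
    rw [sum_eq_pair (f := fun x => P (i, j) x * M g x q) hne
      (fun x h1 h2 => by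
        show P (i, j) x * M g x q = 0
        rw [hsupp (i, j) x h1 h2, zero_mul])] at h
    rw [hua i j hij, hub i j hij] at h
    exact h
  have hdiagrow : ∀ (g : G) (i : Fin d) (q : Fin d × Fin d),
      c * M g (i, i) q = P (i, i) q := by
    intro g i q
    have h := congrFun (congrFun (habsR g) (i, i)) q
    rw [Matrix.mul_apply] at h
    rw [sum_eq_single' (fun x => P (i, i) x * M g x q) (i, i)
      (fun x hx => by
        show P (i, i) x * M g x q = 0
        rw [hsupp (i, i) x hx (by simpa using hx), zero_mul])] at h
    rw [huc i] at h
    exact h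
  -- values of P rows
  have hPvalrow : ∀ (i j : Fin d) (q : Fin d × Fin d), i ≠ j → P (i, j) q
      = a * (if q = (i, j) then 1 else 0) + b * (if q = (j, i) then 1 else 0) := by
    intro i j q hij
    by_cases hq1 : q = (i, j)
    · rw [hq1, if_pos rfl, if_neg (fun hcon : ((i, j) : Fin d × Fin d) = (j, i) =>
        hij (congrArg Prod.fst hcon)), hua i j hij]
      ring
    · by_cases hq2 : q = (j, i)
      · rw [hq2, if_neg (fun hcon : ((j, i) : Fin d × Fin d) = (i, j) =>
          hij (congrArg Prod.fst hcon).symm), if_pos rfl, hub i j hij]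
        ring
      · rw [hsupp (i, j) q hq1 hq2, if_neg hq1, if_neg hq2]
        ring
  have hPvaldiag : ∀ (i : Fin d) (q : Fin d × Fin d),
      P (i, i) q = c * (if q = (i, i) then 1 else 0) := by
    intro i q
    by_cases hq1 : q = (i, i)
    · rw [hq1, if_pos rfl, huc i]
      ring
    · rw [hsupp (i, i) q hq1 (by simpa using hq1), if_neg hq1]
      ring
  -- quadratic relations from P * P = P
  have haa : a * a + b * b = a := by
    have h := congrFun (congrFun hPP (i0, i1)) (i0, i1)
    rw [Matrix.mul_apply] at h
    rw [sum_eq_pair (f := fun x => P (i0, i1) x * P x (i0, i1)) hne01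
      (fun x h1 h2 => by
        show P (i0, i1) x * P x (i0, i1) = 0
        rw [hsupp (i0, i1) x h1 h2, zero_mul])] at h
    rw [hub i1 i0 h10] at h
    rw [← hadef, ← hbdef] at h
    exact h
  have h2ab : a * b + b * a = b := by
    have h := congrFun (congrFun hPP (i0, i1)) (i1, i0)
    rw [Matrix.mul_apply] at h
    rw [sum_eq_pair (f := fun x => P (i0, i1) x * P x (i1, i0)) hne01
      (fun x h1 h2 => by
        show P (i0, i1) x * P x (i1, i0) = 0
        rw [hsupp (i0, i1) x h1 h2, zero_mul])] at h
    rw [hua i1 i0 h10] at h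
    rw [← hadef, ← hbdef] at h
    exact h
  -- orthonormality of rows of U g
  have hortho : ∀ (g : G) (i j : Fin d),
      (∑ l, U g i l * (starRingEnd ℂ) (U g j l)) = if i = j then 1 else 0 := by
    intro g i j
    have hg : U g * star (U g) = 1 := Matrix.mem_unitaryGroup_iff.mp (π g).2
    have h := congrFun (congrFun hg i) j
    rw [Matrix.mul_apply] at h
    rw [Matrix.one_apply] at h
    rw [← h]
    refine Finset.sum_congr rfl fun l _ => ?_
    rw [Matrix.star_apply, RCLike.star_def]
  -- every M g is the identity
  have hM1 : ∀ g : G, M g = 1 := by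
    have hMapply : ∀ (g : G) (i j k l : Fin d), M g (i, j) (k, l) = U g i k * U g j l :=
      fun g i j k l => rfl
    by_cases hbz : b = 0
    · have ha0 : a ≠ 0 := fun h => hab ⟨h, hbz⟩
      have ha1 : a = 1 := by
        have hthis : a * a = a := by linear_combination haa - b * hbz
        have hq : a * (a - 1) = 0 := by linear_combination hthis
        rcases mul_eq_zero.mp hq with h' | h'
        · exact absurd h' ha0
        · exact sub_eq_zero.mp h'
      have hc1 : c = 1 := by rw [hcab, ha1, hbz, add_zero]
      intro g
      ext ⟨i, j⟩ ⟨k, l⟩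
      rw [Matrix.one_apply, hMapply]
      rcases eq_or_ne i j with rfl | hij
      · have h := hdiagrow g i (k, l)
        rw [hPvaldiag i (k, l), hc1, one_mul, one_mul, hMapply] at h
        rw [h]
        by_cases hq : ((k, l) : Fin d × Fin d) = (i, i)
        · rw [if_pos hq, if_pos hq.symm]
        · rw [if_neg hq, if_neg (fun hcon => hq hcon.symm)]
      · have h := hoffrow g i j (k, l) hij
        rw [hPvalrow i j (k, l) hij, ha1, hbz] at h
        simp only [one_mul, zero_mul, add_zero] at h
        rw [hMapply] at h
        rw [h]
        by_cases hq : ((k, l) : Fin d × Fin d) = (i, j)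
        · rw [if_pos hq, if_pos hq.symm]
        · rw [if_neg hq, if_neg (fun hcon => hq hcon.symm)]
    · -- b ≠ 0 : a = 1/2
      have ha2 : a = 1 / 2 := by
        have h : (2 * a - 1) * b = 0 := by linear_combination h2ab
        rcases mul_eq_zero.mp h with h' | h'
        · linear_combination h' / 2
        · exact absurd h' hbz
      intro g
      have hrow : ∀ i j k l : Fin d, i ≠ j →
          U g i k * U g j l + (2 * b) * (U g j k * U g i l)
          = (if k = i ∧ l = j then 1 else 0)
            + (2 * b) * (if k = j ∧ l = i then 1 else 0) := by
        intro i j k l hij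
        have h := hoffrow g i j (k, l) hij
        rw [hPvalrow i j (k, l) hij, hMapply, hMapply, ha2] at h
        have e1 : (if ((k, l) : Fin d × Fin d) = (i, j) then (1:ℂ) else 0)
            = if k = i ∧ l = j then 1 else 0 := by
          simp [Prod.ext_iff]
        have e2 : (if ((k, l) : Fin d × Fin d) = (j, i) then (1:ℂ) else 0)
            = if k = j ∧ l = i then 1 else 0 := by
          simp [Prod.ext_iff]
        rw [e1, e2] at h
        linear_combination 2 * h
      exact case_pm hd (hortho g) (2 * b) hrow
  -- hence the Haar twirl is the identity map, contradiction
  have hT : ∀ ρ : Matrix (Fin d × Fin d) (Fin d × Fin d) ℂ, haarTwirl (Fin d) ρ = ρ := by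
    intro ρ
    rw [← hdes ρ]
    have he : ∀ g : G, (U g ⊗ₖ U g) * ρ * (U g ⊗ₖ U g)ᴴ = ρ := by
      intro g
      have h1 : (U g ⊗ₖ U g) = M g := rfl
      rw [h1, hM1 g, Matrix.conjTranspose_one, Matrix.one_mul, Matrix.mul_one]
    rw [Finset.sum_congr rfl (fun g (_ : g ∈ Finset.univ) => he g)]
    exact hsumconst ρ
  set E : Matrix (Fin d × Fin d) (Fin d × Fin d) ℂ :=
    Matrix.single ((i0, i0) : Fin d × Fin d) ((i0, i1) : Fin d × Fin d) (1 : ℂ)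
    with hEdef
  have hcommE : ∀ v ∈ Matrix.unitaryGroup (Fin d) ℂ, (v ⊗ₖ v) * E = E * (v ⊗ₖ v) := by
    intro v hv
    refine comm_of_conj_fixed hv ?_
    have h := haarTwirl_conj E (⟨v, hv⟩ : UG (Fin d))
    rw [hT E] at h
    exact h
  have hEne : E (i0, i0) (i0, i1) ≠ 0 := by
    rw [hEdef, Matrix.single_apply_same]
    exact one_ne_zero
  rcases support_lemma hcommE hEne with h' | h'
  · exact h01 (congrArg Prod.snd h').symm
  · exact h01 (congrArg Prod.snd h').symm

end RealCharAux

/-- for `d > 2`, a unitary representation with a real-valued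
character never yields a unitary 2-design. -/
theorem real_character_not_twoDesign (d : ℕ) (hd : 2 < d)
    (G : Type) [Group G] [Fintype G] (π : G →* Matrix.unitaryGroup (Fin d) ℂ)
    (hreal : ∀ g : G,
      conj (Matrix.trace (π g : Matrix (Fin d) (Fin d) ℂ)) =
        Matrix.trace (π g : Matrix (Fin d) (Fin d) ℂ)) :
    ¬ IsUnitaryTwoDesign (fun g : G => (π g : Matrix (Fin d) (Fin d) ℂ)) := by
  intro h
  obtain ⟨hunit, hdes⟩ := h
  exact RealCharAux.main_aux hd π hreal hdes
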